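/- The limit as t → 1⁺ of the ratio ((t²+1)·(t² − 4t·arctan((t−1)/(t+1)) − 1)) / (2(t−1)²·(t²+t+1)·arctan((t−1)/(t+1))) equals 4/9. -/

import Mathlib

open Real Filter Set Topology

noncomputable def F1 (t : ℝ) : ℝ := t ^ 2 - 1 - 4 * t * Real.arctan t + Real.pi * t
noncomputable def F2 (t : ℝ) : ℝ := 2 * t - 4 * Real.arctan t - 4 * t / (1 + t ^ 2) + Real.pi
noncomputable def F3 (t : ℝ) : ℝ := 2 - 4 / (1 + t ^ 2) - 4 * (1 - t ^ 2) / (1 + t ^ 2) ^ 2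

lemma den_ne (t : ℝ) : (1 : ℝ) + t ^ 2 ≠ 0 := by positivity

lemma hF1 (t : ℝ) : HasDerivAt F1 (F2 t) t := by
  unfold F1 F2
  have ha := Real.hasDerivAt_arctan t
  have h1 : HasDerivAt (fun x : ℝ => x ^ 2 - 1) (2 * t) t := by
    simpa using (hasDerivAt_pow 2 t).sub_const 1
  have h2 : HasDerivAt (fun x : ℝ => 4 * x * Real.arctan x)
      (4 * 1 * Real.arctan t + 4 * t * (1 / (1 + t ^ 2))) t :=
    ((hasDerivAt_id' (x := t)).const_mul (4:ℝ)).mul ha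
  have h3 : HasDerivAt (fun x : ℝ => Real.pi * x) Real.pi t := by
    simpa using (hasDerivAt_id t).const_mul Real.pi
  have := (h1.sub h2).add h3
  refine this.congr_deriv ?_
  field_simp
  try ring

lemma hF2 (t : ℝ) : HasDerivAt F2 (F3 t) t := by
  unfold F2 F3
  have ha := Real.hasDerivAt_arctan t
  have h1 : HasDerivAt (fun x : ℝ => 2 * x) 2 t := by
    simpa using (hasDerivAt_id t).const_mul (2:ℝ)
  have h2 : HasDerivAt (fun x : ℝ => 4 * Real.arctan x) (4 * (1 / (1 + t ^ 2))) t :=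
    ha.const_mul 4
  have hnum : HasDerivAt (fun x : ℝ => 4 * x) 4 t := by
    simpa using (hasDerivAt_id t).const_mul (4:ℝ)
  have hden : HasDerivAt (fun x : ℝ => 1 + x ^ 2) (2 * t) t := by
    simpa using (hasDerivAt_pow 2 t).const_add 1
  have h3 : HasDerivAt (fun x : ℝ => 4 * x / (1 + x ^ 2))
      ((4 * (1 + t ^ 2) - 4 * t * (2 * t)) / (1 + t ^ 2) ^ 2) t :=
    hnum.div hden (den_ne t)
  have := ((h1.sub h2).sub h3).add_const Real.pi
  refine this.congr_deriv ?_
  rw [mul_one_div]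
  congr 1
  ring

lemma hF3 : HasDerivAt F3 4 1 := by
  unfold F3
  have hden : HasDerivAt (fun x : ℝ => 1 + x ^ 2) 2 (1:ℝ) := by
    simpa using (hasDerivAt_pow 2 (1:ℝ)).const_add 1
  have h2 : HasDerivAt (fun x : ℝ => 4 / (1 + x ^ 2))
      ((0 * (1 + (1:ℝ) ^ 2) - 4 * 2) / (1 + (1:ℝ) ^ 2) ^ 2) 1 :=
    (hasDerivAt_const (1:ℝ) (4 : ℝ)).div hden (den_ne 1)
  have hnum : HasDerivAt (fun x : ℝ => 4 * (1 - x ^ 2)) (-8) (1:ℝ) := by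
    have := ((hasDerivAt_pow 2 (1:ℝ)).const_sub 1).const_mul (4:ℝ)
    refine this.congr_deriv ?_
    norm_num
  have hden2 : HasDerivAt (fun x : ℝ => (1 + x ^ 2) ^ 2) 8 (1:ℝ) := by
    have := hden.pow 2
    refine this.congr_deriv ?_
    norm_num
  have h3 : HasDerivAt (fun x : ℝ => 4 * (1 - x ^ 2) / (1 + x ^ 2) ^ 2)
      ((-8 * ((1 + (1:ℝ) ^ 2) ^ 2) - 4 * (1 - (1:ℝ) ^ 2) * 8) / ((1 + (1:ℝ) ^ 2) ^ 2) ^ 2) 1 :=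
    hnum.div hden2 (by norm_num)
  have := ((hasDerivAt_const (1:ℝ) (2:ℝ)).sub h2).sub h3
  refine this.congr_deriv ?_
  norm_num

lemma hg1 (t : ℝ) : HasDerivAt (fun x : ℝ => (x - 1) ^ 3) (3 * (t - 1) ^ 2) t := by
  have := ((hasDerivAt_id t).sub_const 1).pow 3
  refine this.congr_deriv ?_
  norm_num

lemma hg2 (t : ℝ) : HasDerivAt (fun x : ℝ => 3 * (x - 1) ^ 2) (6 * (t - 1)) t := by
  have := (((hasDerivAt_id t).sub_const 1).pow 2).const_mul (3:ℝ)
  refine this.congr_deriv ?_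
  norm_num; ring

theorem stmt_16 :
    Filter.Tendsto
      (fun t : ℝ =>
        ((t ^ 2 + 1) * (t ^ 2 - 4 * t * Real.arctan ((t - 1) / (t + 1)) - 1)) /
          (2 * (t - 1) ^ 2 * (t ^ 2 + t + 1) * Real.arctan ((t - 1) / (t + 1))))
      (nhdsWithin 1 (Set.Ioi (1 : ℝ))) (nhds (4 / 9)) := by
  have hmem : ∀ᶠ t : ℝ in 𝓝[>] 1, t ∈ Ioi (1 : ℝ) := eventually_mem_nhdsWithin
  have hmono : 𝓝[>] (1 : ℝ) ≤ 𝓝[≠] (1 : ℝ) :=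
    nhdsWithin_mono 1 (fun x hx => ne_of_gt hx)
  have hle : 𝓝[>] (1 : ℝ) ≤ 𝓝 1 := nhdsWithin_le_nhds
  -- arctan identity
  have harc : ∀ t : ℝ, 1 < t → Real.arctan ((t - 1) / (t + 1)) = Real.arctan t - π / 4 := by
    intro t ht
    have hlt : (t - 1) / (t + 1) * 1 < 1 := by
      rw [mul_one, div_lt_one (by linarith)]; linarith
    have h := Real.arctan_add hlt
    rw [Real.arctan_one] at h
    have hval : ((t - 1) / (t + 1) + 1) / (1 - (t - 1) / (t + 1) * 1) = t := by
      rw [mul_one]; field_simp; ring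
    rw [hval] at h
    linarith
  -- Factor 1 : → 1/3
  have L1 : Tendsto (fun t : ℝ => (t ^ 2 + 1) / (2 * (t ^ 2 + t + 1))) (𝓝[>] 1) (𝓝 (1 / 3)) := by
    have hc : ContinuousAt (fun t : ℝ => (t ^ 2 + 1) / (2 * (t ^ 2 + t + 1))) 1 :=
      ContinuousAt.div (by fun_prop) (by fun_prop) (by norm_num)
    have h := hc.tendsto.mono_left hle
    convert h using 2
    norm_num
  -- Factor 2 : → 2
  have L2 : Tendsto (fun t : ℝ => (t - 1) / (Real.arctan t - π / 4)) (𝓝[>] 1) (𝓝 2) := by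
    have h := Real.hasDerivAt_arctan 1
    rw [hasDerivAt_iff_tendsto_slope] at h
    have hs : Tendsto (slope Real.arctan 1) (𝓝[>] 1) (𝓝 (1 / (1 + 1 ^ 2))) := h.mono_left hmono
    have hinv := hs.inv₀ (by norm_num)
    have h2 : Tendsto (fun t : ℝ => (slope Real.arctan 1 t)⁻¹) (𝓝[>] 1) (𝓝 2) := by
      convert hinv using 2; norm_num
    refine h2.congr ?_
    intro t
    rw [slope_def_field, Real.arctan_one, inv_div]
  -- innermost : F3/(6(t-1)) → 2/3
  have Lin : Tendsto (fun t : ℝ => F3 t / (6 * (t - 1))) (𝓝[>] 1) (𝓝 (2 / 3)) := by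
    have h := hF3
    rw [hasDerivAt_iff_tendsto_slope] at h
    have hs : Tendsto (slope F3 1) (𝓝[>] 1) (𝓝 4) := h.mono_left hmono
    have h6 : Tendsto (fun t : ℝ => slope F3 1 t / 6) (𝓝[>] 1) (𝓝 (2 / 3)) := by
      convert hs.div_const 6 using 2; norm_num
    refine h6.congr' ?_
    filter_upwards [hmem] with t ht
    have hF30 : F3 1 = 0 := by unfold F3; norm_num
    rw [slope_def_field, hF30, sub_zero, div_div, mul_comm]
  -- F3 value/continuity based limits
  have hF20 : F2 1 = 0 := by
    unfold F2
    rw [Real.arctan_one]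
    ring_nf
  have hF10 : F1 1 = 0 := by
    unfold F1
    rw [Real.arctan_one]
    ring_nf
  have tF2 : Tendsto F2 (𝓝[>] 1) (𝓝 0) := by
    have := (hF2 1).differentiableAt.continuousAt.tendsto.mono_left
      hle
    rwa [hF20] at this
  have tF1 : Tendsto F1 (𝓝[>] 1) (𝓝 0) := by
    have := (hF1 1).differentiableAt.continuousAt.tendsto.mono_left
      hle
    rwa [hF10] at this
  have tg2 : Tendsto (fun t : ℝ => 3 * (t - 1) ^ 2) (𝓝[>] 1) (𝓝 0) := by
    have hc : ContinuousAt (fun t : ℝ => 3 * (t - 1) ^ 2) 1 := by fun_prop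
    have h := hc.tendsto.mono_left hle
    convert h using 2
    norm_num
  have tg1 : Tendsto (fun t : ℝ => (t - 1) ^ 3) (𝓝[>] 1) (𝓝 0) := by
    have hc : ContinuousAt (fun t : ℝ => (t - 1) ^ 3) 1 := by fun_prop
    have h := hc.tendsto.mono_left hle
    convert h using 2
    norm_num
  -- L'Hopital #2
  have L3b : Tendsto (fun t : ℝ => F2 t / (3 * (t - 1) ^ 2)) (𝓝[>] 1) (𝓝 (2 / 3)) := by
    refine HasDerivAt.lhopital_zero_nhdsGT
      (Eventually.of_forall hF2) (Eventually.of_forall hg2)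
      (hmem.mono fun t ht => ?_) tF2 tg2 ?_
    · have : (0:ℝ) < t - 1 := by simpa using ht
      positivity
    · exact Lin.congr fun t => by unfold F3; ring_nf
  -- L'Hopital #1
  have L3 : Tendsto (fun t : ℝ => F1 t / (t - 1) ^ 3) (𝓝[>] 1) (𝓝 (2 / 3)) := by
    refine HasDerivAt.lhopital_zero_nhdsGT
      (Eventually.of_forall hF1) (Eventually.of_forall hg1)
      (hmem.mono fun t ht => ?_) tF1 tg1 L3b
    · have : (0:ℝ) < t - 1 := by simpa using ht
      positivity
  -- combine
  have Lprod := (L1.mul L3).mul L2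
  have hval : ((1:ℝ) / 3 * (2 / 3) * 2) = 4 / 9 := by norm_num
  rw [hval] at Lprod
  refine Lprod.congr' ?_
  filter_upwards [hmem] with t ht
  have ht1 : (1:ℝ) < t := ht
  have hA : 0 < Real.arctan t - π / 4 := by
    rw [← Real.arctan_one]
    exact sub_pos.mpr (Real.arctan_strictMono ht1)
  have htm : t - 1 ≠ 0 := by intro h; nlinarith
  have hq : t ^ 2 + t + 1 ≠ 0 := by nlinarith
  have hA0 : Real.arctan t - π / 4 ≠ 0 := ne_of_gt hA
  have hs : (0:ℝ) < t ^ 2 + t + 1 := by nlinarith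
  have hnum : t ^ 2 - 4 * t * (Real.arctan t - π / 4) - 1 = F1 t := by unfold F1; ring
  rw [harc t ht1, hnum, div_mul_div_comm, div_mul_div_comm,
    div_eq_div_iff
      (mul_ne_zero (mul_ne_zero (by positivity) (pow_ne_zero 3 htm)) hA0)
      (mul_ne_zero (mul_ne_zero (mul_ne_zero two_ne_zero (pow_ne_zero 2 htm)) hs.ne') hA0)]
  ring
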